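/- arXiv:1001.1802 — 9 statements merged into one kernel-verified Lean document; each statement's English description precedes it below -/
import Mathlib

section
/- For all x y : F, the generalized fusion exponential applied to the vector of powers of g satisfies E (Φ x) y = Φ (x * y). (This is the defining correctness property of the construction, equation (13): raising g^x to the power y yields g^{xy}.) -/
/-- Equation (13): raising `g^x` (encoded as the vector `Φ x`) to the fusion power `y`
yields `g^{x*y}`, i.e. `E (Φ x) y = Φ (x * y)`. -/
theorem fusionExp_phi
    {q n : ℕ} (hq : Nat.Prime q) (hn : 1 ≤ n)
    {G : Type*} [CommGroup G] [Fintype G] (hcard : Fintype.card G = q)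
    (f : Polynomial (ZMod q)) (hmonic : f.Monic) (hirr : Irreducible f)
    (hdeg : f.natDegree = n)
    (B : Module.Basis (Fin n) (ZMod q) (AdjoinRoot f))
    (hB : ∀ i : Fin n, B i = AdjoinRoot.root f ^ (i : ℕ))
    (E : (Fin n → G) → AdjoinRoot f → (Fin n → G))
    (hE : ∀ (gg : Fin n → G) (y : AdjoinRoot f) (i : Fin n),
      E gg y i = ∏ j : Fin n, gg j ^ (B.repr (AdjoinRoot.root f ^ (j : ℕ) * y) i).val)
    (g : G) (hg : ∀ h : G, ∃ k : ℕ, h = g ^ k)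
    (Φ : AdjoinRoot f → (Fin n → G))
    (hΦ : ∀ (x : AdjoinRoot f) (i : Fin n), Φ x i = g ^ (B.repr x i).val) :
    ∀ x y : AdjoinRoot f, E (Φ x) y = Φ (x * y) := by
  intro x y
  haveI : NeZero q := ⟨hq.ne_zero⟩
  have hord : g ^ q = 1 := by rw [← hcard]; exact pow_card_eq_one
  have key : ∀ m : ℕ, g ^ m = g ^ ((m : ZMod q)).val := by
    intro m
    rw [ZMod.val_natCast]
    conv_lhs => rw [← Nat.div_add_mod m q]
    rw [pow_add, pow_mul, hord, one_pow, one_mul]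
  funext i
  rw [hE]
  simp only [hΦ]
  have hrepr : B.repr (x * y) i
      = ∑ j : Fin n, B.repr x j * B.repr (AdjoinRoot.root f ^ (j : ℕ) * y) i := by
    conv_lhs => rw [← B.sum_repr x]
    rw [Finset.sum_mul]
    simp [smul_mul_assoc, map_sum, Finsupp.finset_sum_apply, hB]
  have step1 : (∏ j : Fin n, (g ^ (B.repr x j).val) ^ (B.repr (AdjoinRoot.root f ^ (j : ℕ) * y) i).val)
      = g ^ ∑ j : Fin n, (B.repr x j).val * (B.repr (AdjoinRoot.root f ^ (j : ℕ) * y) i).val := by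
    rw [← Finset.prod_pow_eq_pow_sum]
    simp [pow_mul]
  rw [step1, key]
  congr 1
  have : ((∑ j : Fin n, (B.repr x j).val * (B.repr (AdjoinRoot.root f ^ (j : ℕ) * y) i).val : ℕ) : ZMod q)
      = B.repr (x * y) i := by
    push_cast [ZMod.natCast_val, ZMod.cast_id]
    rw [hrepr]
  rw [this]
end

section
/- The generalized fusion exponential satisfies the first exponentiation law for every base: for all 𝗀 : Fin n → G and all x y : F, E (E 𝗀 x) y = E 𝗀 (x * y). (Property (1) of exponentiation, fulfilled by construction.) -/
/-- Property (1): for every base `gg`, `(gg^x)^y = gg^(x*y)` for the generalized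
fusion exponential. -/
theorem fusionExp_mul
    {q n : ℕ} (hq : Nat.Prime q) (hn : 1 ≤ n)
    {G : Type*} [CommGroup G] [Fintype G] (hcard : Fintype.card G = q)
    (f : Polynomial (ZMod q)) (hmonic : f.Monic) (hirr : Irreducible f)
    (hdeg : f.natDegree = n)
    (B : Module.Basis (Fin n) (ZMod q) (AdjoinRoot f))
    (hB : ∀ i : Fin n, B i = AdjoinRoot.root f ^ (i : ℕ))
    (E : (Fin n → G) → AdjoinRoot f → (Fin n → G))
    (hE : ∀ (gg : Fin n → G) (y : AdjoinRoot f) (i : Fin n),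
      E gg y i = ∏ j : Fin n, gg j ^ (B.repr (AdjoinRoot.root f ^ (j : ℕ) * y) i).val) :
    ∀ (gg : Fin n → G) (x y : AdjoinRoot f), E (E gg x) y = E gg (x * y) := by
  haveI : Fact (Nat.Prime q) := ⟨hq⟩
  have hpow : ∀ (g : G) (m : ℕ) (a : ZMod q), ((m : ZMod q) = a) → g ^ m = g ^ a.val := by
    intro g m a hma
    have hord : orderOf g ∣ q := hcard ▸ orderOf_dvd_card
    have hmod : m % q = a.val % q := by
      rw [← ZMod.val_natCast, hma, Nat.mod_eq_of_lt (ZMod.val_lt a)]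
    rw [← pow_mod_orderOf, ← pow_mod_orderOf g a.val]
    congr 1
    exact Nat.ModEq.of_dvd hord hmod
  have key : ∀ (k : Fin n) (z w : AdjoinRoot f) (i : Fin n),
      B.repr (AdjoinRoot.root f ^ (k : ℕ) * (z * w)) i
        = ∑ j : Fin n, B.repr (AdjoinRoot.root f ^ (k : ℕ) * z) j
            * B.repr (AdjoinRoot.root f ^ (j : ℕ) * w) i := by
    intro k z w i
    conv_lhs => rw [← mul_assoc, ← B.sum_repr (AdjoinRoot.root f ^ (k : ℕ) * z)]
    rw [Finset.sum_mul]
    simp_rw [smul_mul_assoc, hB]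
    rw [map_sum]
    simp [Finsupp.smul_apply]
  intro gg x y
  funext i
  rw [hE]
  have step : ∀ j : Fin n, E gg x j ^ (B.repr (AdjoinRoot.root f ^ (j : ℕ) * y) i).val
      = ∏ k : Fin n, gg k ^ ((B.repr (AdjoinRoot.root f ^ (k : ℕ) * x) j).val
          * (B.repr (AdjoinRoot.root f ^ (j : ℕ) * y) i).val) := by
    intro j
    rw [hE, ← Finset.prod_pow]
    simp [pow_mul]
  simp_rw [step]
  rw [Finset.prod_comm, hE]
  refine Finset.prod_congr rfl fun k _ => ?_
  rw [Finset.prod_pow_eq_pow_sum]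
  refine hpow (gg k) _ _ ?_
  rw [key]
  push_cast
  simp [ZMod.natCast_val, ZMod.cast_id]
end

section
/- The generalized fusion exponential satisfies the second exponentiation law: for all 𝗀 : Fin n → G and all x y : F, E 𝗀 (x + y) = (E 𝗀 x) * (E 𝗀 y), where the product on the right is componentwise multiplication in Fin n → G. (Property (2), proved in Section 4.2 via linearity of the coefficient functions.) -/
/-- Property (2): `gg^(x+y) = gg^x * gg^y` for the generalized fusion exponential,
with componentwise multiplication in `Fin n → G`. -/
theorem fusionExp_add
    {q n : ℕ} (hq : Nat.Prime q) (hn : 1 ≤ n)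
    {G : Type*} [CommGroup G] [Fintype G] (hcard : Fintype.card G = q)
    (f : Polynomial (ZMod q)) (hmonic : f.Monic) (hirr : Irreducible f)
    (hdeg : f.natDegree = n)
    (B : Module.Basis (Fin n) (ZMod q) (AdjoinRoot f))
    (hB : ∀ i : Fin n, B i = AdjoinRoot.root f ^ (i : ℕ))
    (E : (Fin n → G) → AdjoinRoot f → (Fin n → G))
    (hE : ∀ (gg : Fin n → G) (y : AdjoinRoot f) (i : Fin n),
      E gg y i = ∏ j : Fin n, gg j ^ (B.repr (AdjoinRoot.root f ^ (j : ℕ) * y) i).val) :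
    ∀ (gg : Fin n → G) (x y : AdjoinRoot f), E gg (x + y) = E gg x * E gg y := by
  haveI : NeZero q := ⟨hq.pos.ne'⟩
  have hq1 : ∀ (g : G) (m : ℕ), g ^ (m % q) = g ^ m := by
    intro g m
    conv_rhs => rw [← Nat.mod_add_div m q]
    rw [pow_add, pow_mul, ← hcard, pow_card_eq_one, one_pow, mul_one]
  intro gg x y
  funext i
  simp only [Pi.mul_apply, hE]
  rw [← Finset.prod_mul_distrib]
  apply Finset.prod_congr rfl
  intro j _
  rw [mul_add, map_add]
  simp only [Finsupp.add_apply]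
  rw [ZMod.val_add, hq1, pow_add]
end

section
/- (Theorem 1: The Generalized Fusion Exponential Function is bijective.) For every 𝗀 : Fin n → G with 𝗀 ≠ (fun _ => 1), the map F → (Fin n → G) given by x ↦ E 𝗀 x is bijective. -/
/-- Theorem 1: the Generalized Fusion Exponential Function is bijective for every
base `gg ≠ (1,…,1)`. -/
theorem fusionExp_bijective
    {q n : ℕ} (hq : Nat.Prime q) (hn : 1 ≤ n)
    {G : Type*} [CommGroup G] [Fintype G] (hcard : Fintype.card G = q)
    (f : Polynomial (ZMod q)) (hmonic : f.Monic) (hirr : Irreducible f)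
    (hdeg : f.natDegree = n)
    (B : Module.Basis (Fin n) (ZMod q) (AdjoinRoot f))
    (hB : ∀ i : Fin n, B i = AdjoinRoot.root f ^ (i : ℕ))
    (E : (Fin n → G) → AdjoinRoot f → (Fin n → G))
    (hE : ∀ (gg : Fin n → G) (y : AdjoinRoot f) (i : Fin n),
      E gg y i = ∏ j : Fin n, gg j ^ (B.repr (AdjoinRoot.root f ^ (j : ℕ) * y) i).val) :
    ∀ gg : Fin n → G, gg ≠ (fun _ => 1) → Function.Bijective (fun x : AdjoinRoot f => E gg x) := by
  haveI : Fact (Nat.Prime q) := ⟨hq⟩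
  haveI : Fact (Irreducible f) := ⟨hirr⟩
  intro gg hgg
  -- G is cyclic of order q
  have hnatcard : Nat.card G = q := by rw [Nat.card_eq_fintype_card, hcard]
  obtain ⟨g, hgen⟩ := (isCyclic_of_prime_card (p := q) hnatcard).exists_generator
  have horder : orderOf g = q := by
    rw [orderOf_eq_card_of_forall_mem_zpowers hgen, hnatcard]
  set ψ : ZMod q → G := fun c => g ^ c.val with hψdef
  have hψ0 : ψ 0 = 1 := by simp [hψdef]
  have hpow : ∀ m : ℕ, g ^ (m % q) = g ^ m := by
    intro m; rw [← horder, pow_mod_orderOf]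
  have hψadd : ∀ c d : ZMod q, ψ (c + d) = ψ c * ψ d := by
    intro c d
    simp only [hψdef, ZMod.val_add, hpow, pow_add]
  have hψmul : ∀ c d : ZMod q, ψ c ^ d.val = ψ (c * d) := by
    intro c d
    simp only [hψdef, ZMod.val_mul, hpow, ← pow_mul]
  have hψinj : Function.Injective ψ := by
    intro c d h
    exact ZMod.val_injective q
      (pow_injOn_Iio_orderOf (by rw [horder]; exact Set.mem_Iio.2 (ZMod.val_lt c))
        (by rw [horder]; exact Set.mem_Iio.2 (ZMod.val_lt d)) h)
  have hψbij : Function.Bijective ψ := by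
    rw [Fintype.bijective_iff_injective_and_card]
    exact ⟨hψinj, by rw [ZMod.card, hcard]⟩
  -- sum rule
  have hsum : ∀ (s : Finset (Fin n)) (c : Fin n → ZMod q),
      ψ (∑ j ∈ s, c j) = ∏ j ∈ s, ψ (c j) := by
    intro s
    induction s using Finset.induction_on with
    | empty => intro c; simp [hψ0]
    | insert _ _ h ih =>
      intro c
      rw [Finset.sum_insert h, Finset.prod_insert h, hψadd, ih]
  -- choose exponents a with ψ (a j) = gg j
  choose a ha using fun j => hψbij.2 (gg j)
  have hane : a ≠ 0 := by
    intro h0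
    apply hgg
    funext j
    rw [← ha j, congrFun h0 j, Pi.zero_apply, hψ0]
  set α : AdjoinRoot f := ∑ j : Fin n, a j • B j with hα
  have hrepr : ∀ y : AdjoinRoot f, ∀ i : Fin n,
      B.repr (α * y) i = ∑ j : Fin n, a j * B.repr (AdjoinRoot.root f ^ (j : ℕ) * y) i := by
    intro y i
    have : α * y = ∑ j : Fin n, a j • (AdjoinRoot.root f ^ (j : ℕ) * y) := by
      rw [hα, Finset.sum_mul]
      exact Finset.sum_congr rfl fun j _ => by rw [hB j, smul_mul_assoc]
    rw [this, map_sum, Finsupp.finset_sum_apply]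
    exact Finset.sum_congr rfl fun j _ => by rw [map_smul, Finsupp.smul_apply, smul_eq_mul]
  have hαne : α ≠ 0 := by
    intro h0
    apply hane
    funext j
    have := Module.Basis.repr_sum_self B a
    rw [← hα, h0, map_zero] at this
    have := congrFun this j
    simpa using this.symm
  -- key formula
  have hkey : ∀ (y : AdjoinRoot f) (i : Fin n), E gg y i = ψ (B.equivFun (α * y) i) := by
    intro y i
    rw [hE, Module.Basis.equivFun_apply, hrepr y i, hsum]
    exact Finset.prod_congr rfl fun j _ => by rw [← ha j, hψmul]
  let e : ZMod q ≃ G := Equiv.ofBijective ψ hψbij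
  have hfun : (fun x : AdjoinRoot f => E gg x)
      = (fun v : Fin n → ZMod q => fun i => e (v i)) ∘ ⇑B.equivFun ∘ (fun y => α * y) := by
    funext y
    funext i
    exact hkey y i
  rw [hfun]
  exact ((Equiv.piCongrRight fun _ : Fin n => e).bijective.comp B.equivFun.bijective).comp
    (mulLeft_bijective₀ α hαne)
end

section
/- (Well-definedness of the Generalized Fusion Discrete Logarithm.) For every 𝗀 : Fin n → G with 𝗀 ≠ (fun _ => 1) and every 𝘆 : Fin n → G, there exists a unique x : F such that E 𝗀 x = 𝘆. -/
/-- Well-definedness of the Generalized Fusion Discrete Logarithm: for every base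
`gg ≠ (1,…,1)` and every `yy`, there is exactly one `x` with `E gg x = yy`. -/
theorem fusionDlog_existsUnique
    {q n : ℕ} (hq : Nat.Prime q) (hn : 1 ≤ n)
    {G : Type*} [CommGroup G] [Fintype G] (hcard : Fintype.card G = q)
    (f : Polynomial (ZMod q)) (hmonic : f.Monic) (hirr : Irreducible f)
    (hdeg : f.natDegree = n)
    (B : Module.Basis (Fin n) (ZMod q) (AdjoinRoot f))
    (hB : ∀ i : Fin n, B i = AdjoinRoot.root f ^ (i : ℕ))
    (E : (Fin n → G) → AdjoinRoot f → (Fin n → G))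
    (hE : ∀ (gg : Fin n → G) (y : AdjoinRoot f) (i : Fin n),
      E gg y i = ∏ j : Fin n, gg j ^ (B.repr (AdjoinRoot.root f ^ (j : ℕ) * y) i).val) :
    ∀ (gg : Fin n → G), gg ≠ (fun _ => 1) →
      ∀ yy : Fin n → G, ∃! x : AdjoinRoot f, E gg x = yy := by
  intro gg hgg yy
  haveI : Fact q.Prime := ⟨hq⟩
  haveI : Fact (Irreducible f) := ⟨hirr⟩
  haveI : IsCyclic G := isCyclic_of_prime_card (by rw [Nat.card_eq_fintype_card, hcard])
  set ϑ := AdjoinRoot.root f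
  -- powers of elements of G only matter mod q
  have hpowmod : ∀ (h : G) (a : ℕ), h ^ (a % q) = h ^ a := by
    intro h a
    conv_rhs => rw [← Nat.div_add_mod a q]
    rw [pow_add, pow_mul, ← hcard, pow_card_eq_one, one_pow, one_mul]
  have hpowadd : ∀ (h : G) (a b : ZMod q), h ^ (a + b).val = h ^ a.val * h ^ b.val := by
    intro h a b
    rw [ZMod.val_add, hpowmod, pow_add]
  -- additivity of `E gg`
  have hadd : ∀ x y : AdjoinRoot f, ∀ i, E gg (x + y) i = E gg x i * E gg y i := by
    intro x y i
    rw [hE, hE, hE, ← Finset.prod_mul_distrib]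
    refine Finset.prod_congr rfl fun j _ => ?_
    rw [mul_add, LinearEquiv.map_add, Finsupp.add_apply]
    exact hpowadd _ _ _
  -- a generator of G
  obtain ⟨g, hg⟩ := IsCyclic.exists_generator (α := G)
  have horder : orderOf g = q := by
    rw [orderOf_eq_card_of_forall_mem_zpowers hg, Nat.card_eq_fintype_card, hcard]
  -- write each gg j as a power of g with exponent in ZMod q
  have hmem : ∀ j, ∃ m : ℕ, g ^ m = gg j := fun j =>
    mem_powers_iff_mem_zpowers.mpr (hg (gg j))
  choose m hm using hmem
  set c : Fin n → ZMod q := fun j => (m j : ZMod q) with hc_def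
  have hc : ∀ j, gg j = g ^ (c j).val := by
    intro j
    rw [hc_def]
    simp only [ZMod.val_natCast]
    rw [hpowmod, hm]
  -- some coefficient is nonzero
  obtain ⟨j0, hj0⟩ := Function.ne_iff.mp hgg
  have hcj0 : c j0 ≠ 0 := by
    intro h0
    apply hj0
    rw [hc j0, h0, ZMod.val_zero, pow_zero]
  -- the element w = ∑ c j • ϑ^j is nonzero
  set w : AdjoinRoot f := ∑ j : Fin n, c j • ϑ ^ (j : ℕ) with hw_def
  have hw0 : w ≠ 0 := by
    intro h0
    apply hcj0
    have hwB : ∑ j : Fin n, c j • B j = 0 := by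
      rw [← h0, hw_def]
      exact Finset.sum_congr rfl fun j _ => by rw [hB]
    exact Fintype.linearIndependent_iff.mp B.linearIndependent c hwB j0
  -- trivial kernel
  have hker : ∀ z : AdjoinRoot f, (∀ i, E gg z i = 1) → z = 0 := by
    intro z hz
    have hrepr : ∀ i, B.repr (w * z) i = 0 := by
      intro i
      have h1 : E gg z i = g ^ (∑ j : Fin n, (c j).val * (B.repr (ϑ ^ (j : ℕ) * z) i).val) := by
        rw [hE, ← Finset.prod_pow_eq_pow_sum]
        exact Finset.prod_congr rfl fun j _ => by rw [hc j, ← pow_mul]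
      have h2 : q ∣ ∑ j : Fin n, (c j).val * (B.repr (ϑ ^ (j : ℕ) * z) i).val := by
        have h2' := orderOf_dvd_of_pow_eq_one (h1 ▸ hz i)
        rwa [horder] at h2'
      have h3 : ((∑ j : Fin n, (c j).val * (B.repr (ϑ ^ (j : ℕ) * z) i).val : ℕ) : ZMod q) = 0 :=
        (ZMod.natCast_eq_zero_iff _ _).mpr h2
      push_cast at h3
      simp only [ZMod.natCast_val, ZMod.cast_id] at h3
      calc B.repr (w * z) i
          = B.repr (∑ j : Fin n, c j • (ϑ ^ (j : ℕ) * z)) i := by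
            rw [hw_def, Finset.sum_mul]
            congr 1
            exact congrArg _ (Finset.sum_congr rfl fun j _ => smul_mul_assoc _ _ _)
        _ = ∑ j : Fin n, c j * B.repr (ϑ ^ (j : ℕ) * z) i := by
            simp [map_sum, Finsupp.finset_sum_apply, map_smul, Finsupp.smul_apply]
        _ = 0 := h3
    have hwz : w * z = 0 := by
      have : B.repr (w * z) = 0 := Finsupp.ext hrepr
      exact (LinearEquiv.map_eq_zero_iff B.repr).mp this
    rcases mul_eq_zero.mp hwz with h | h
    · exact absurd h hw0
    · exact h
  -- injectivity
  have hinj : Function.Injective (E gg) := by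
    intro x x' hxx'
    have : x - x' = 0 := by
      apply hker
      intro i
      have h1 : E gg x i = E gg x' i * E gg (x - x') i := by
        rw [← hadd, add_sub_cancel]
      have h2 : E gg x i = E gg x' i := by rw [hxx']
      rw [h2] at h1
      exact (mul_eq_left.mp h1.symm)
    exact sub_eq_zero.mp this
  -- cardinalities
  haveI : Fintype (AdjoinRoot f) := Module.fintypeOfFintype B
  have hcards : Fintype.card (AdjoinRoot f) = Fintype.card (Fin n → G) := by
    rw [Module.card_fintype B, Fintype.card_fun, hcard, ZMod.card, Fintype.card_fin]
  have hbij : Function.Bijective (E gg) :=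
    (Fintype.bijective_iff_injective_and_card (E gg)).mpr ⟨hinj, hcards⟩
  obtain ⟨x, hx⟩ := hbij.surjective yy
  exact ⟨x, hx, fun x' hx' => hinj (hx'.trans hx.symm)⟩
end

section
/- (Key identity in the reduction n-FDLP ≤ DLP of Theorem 3.) For all w z : F with w ≠ 0, one has E (Φ w) (z * w⁻¹) = Φ z; consequently the unique fusion discrete logarithm of Φ z to the base Φ w is z * w⁻¹. -/
/-- Key identity in the reduction n-FDLP ≤ DLP (Theorem 3): for `w ≠ 0`,
`E (Φ w) (z * w⁻¹) = Φ z`, and `z * w⁻¹` is the unique fusion discrete logarithm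
of `Φ z` to the base `Φ w`. -/
theorem fusionDlog_reduction_identity
    {q n : ℕ} [Fact (Nat.Prime q)] (hn : 1 ≤ n)
    {G : Type*} [CommGroup G] [Fintype G] (hcard : Fintype.card G = q)
    (f : Polynomial (ZMod q)) (hmonic : f.Monic) [Fact (Irreducible f)]
    (hdeg : f.natDegree = n)
    (B : Module.Basis (Fin n) (ZMod q) (AdjoinRoot f))
    (hB : ∀ i : Fin n, B i = AdjoinRoot.root f ^ (i : ℕ))
    (E : (Fin n → G) → AdjoinRoot f → (Fin n → G))
    (hE : ∀ (gg : Fin n → G) (y : AdjoinRoot f) (i : Fin n),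
      E gg y i = ∏ j : Fin n, gg j ^ (B.repr (AdjoinRoot.root f ^ (j : ℕ) * y) i).val)
    (g : G) (hg : ∀ h : G, ∃ k : ℕ, h = g ^ k)
    (Φ : AdjoinRoot f → (Fin n → G))
    (hΦ : ∀ (x : AdjoinRoot f) (i : Fin n), Φ x i = g ^ (B.repr x i).val) :
    ∀ w z : AdjoinRoot f, w ≠ 0 →
      E (Φ w) (z * w⁻¹) = Φ z ∧
      ∀ x : AdjoinRoot f, E (Φ w) x = Φ z → x = z * w⁻¹ := by
  have hq := (Fact.out : Nat.Prime q)
  have hq0 : 0 < q := hq.pos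
  have hgq : g ^ q = 1 := by rw [← hcard]; exact pow_card_eq_one
  have gmod : ∀ N : ℕ, g ^ N = g ^ (N % q) := by
    intro N
    conv_lhs => rw [← Nat.div_add_mod N q]
    rw [pow_add, pow_mul, hgq, one_pow, one_mul]
  -- key: E (Φ w) y = Φ (w * y)
  have key : ∀ w y : AdjoinRoot f, E (Φ w) y = Φ (w * y) := by
    intro w y
    funext i
    rw [hE, hΦ]
    have h1 : ∀ j : Fin n, Φ w j ^ (B.repr (AdjoinRoot.root f ^ (j : ℕ) * y) i).val
        = g ^ ((B.repr w j * B.repr (AdjoinRoot.root f ^ (j : ℕ) * y) i).val) := by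
      intro j
      rw [hΦ, ← pow_mul, gmod, ZMod.val_mul]
    rw [Finset.prod_congr rfl (fun j _ => h1 j), Finset.prod_pow_eq_pow_sum]
    have hsum : ((∑ j : Fin n,
        (B.repr w j * B.repr (AdjoinRoot.root f ^ (j : ℕ) * y) i).val : ℕ) : ZMod q)
        = B.repr (w * y) i := by
      push_cast [ZMod.natCast_val, ZMod.cast_id]
      have hw : (∑ j : Fin n, B.repr w j • B j) = w := B.sum_repr w
      conv_rhs => rw [← hw]
      rw [Finset.sum_mul, map_sum, Finsupp.finset_sum_apply]
      refine Finset.sum_congr rfl (fun j _ => ?_)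
      rw [smul_mul_assoc, map_smul, hB j]
      simp
    rw [gmod, ← ZMod.val_natCast, hsum]
  -- order of g is q
  have hord : orderOf g = q := by
    have hg1 : g ≠ 1 := by
      intro h
      have hall : ∀ x : G, x = 1 := by
        intro x; obtain ⟨k, hk⟩ := hg x; rw [hk, h, one_pow]
      have h1 : Fintype.card G = 1 :=
        Fintype.card_eq_one_iff.mpr ⟨1, fun x => hall x⟩
      exact hq.one_lt.ne' (h1 ▸ hcard ▸ rfl)
    have hdvd : orderOf g ∣ q := hcard ▸ orderOf_dvd_card
    rcases (Nat.Prime.eq_one_or_self_of_dvd hq _ hdvd) with h | h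
    · exact absurd (orderOf_eq_one_iff.mp h) hg1
    · exact h
  have hΦinj : Function.Injective Φ := by
    intro a b hab
    apply B.repr.injective
    ext i
    have hi : Φ a i = Φ b i := by rw [hab]
    rw [hΦ, hΦ] at hi
    have h1 : (B.repr a i).val < q := ZMod.val_lt _
    have h2 : (B.repr b i).val < q := ZMod.val_lt _
    have hv : (B.repr a i).val = (B.repr b i).val := by
      have hmod' := pow_eq_pow_iff_modEq.mp hi
      unfold Nat.ModEq at hmod'
      rw [hord] at hmod'
      rwa [Nat.mod_eq_of_lt h1, Nat.mod_eq_of_lt h2] at hmod'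
    have hc := congrArg (Nat.cast : ℕ → ZMod q) hv
    simpa [ZMod.natCast_val, ZMod.cast_id] using hc
  intro w z hw
  have hwz : w * (z * w⁻¹) = z := by
    field_simp
  constructor
  · rw [key, hwz]
  · intro x hx
    rw [key] at hx
    have hwx := hΦinj hx
    have : x = w⁻¹ * (w * x) := by
      rw [← mul_assoc, inv_mul_cancel₀ hw, one_mul]
    rw [this, hwx, mul_comm]
end

section
/- (Key identity in the reduction DLP ≤ n-FDLP of Theorem 3, also underlying Theorems 4 and 5.) Define ι : G → (Fin n → G) by ι h i := if i = 0 then h else 1. Then for every h : G and every x : ZMod q, E (ι h) (algebraMap (ZMod q) F x) = ι (h ^ x). In particular, raising (h,1,…,1) to the fusion power (x,0,…,0) yields (h^x,1,…,1). -/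
/-- Key identity in the reduction DLP ≤ n-FDLP (Theorem 3): raising
`ι h = (h,1,…,1)` to the fusion power `(x,0,…,0)` (the image of `x : ZMod q` under
the algebra map into `F`) yields `ι (h^x) = (h^x,1,…,1)`. -/
theorem fusionExp_scalar_embedding
    {q n : ℕ} (hq : Nat.Prime q) (hn : 1 ≤ n)
    {G : Type*} [CommGroup G] [Fintype G] (hcard : Fintype.card G = q)
    (f : Polynomial (ZMod q)) (hmonic : f.Monic) (hirr : Irreducible f)
    (hdeg : f.natDegree = n)
    (B : Module.Basis (Fin n) (ZMod q) (AdjoinRoot f))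
    (hB : ∀ i : Fin n, B i = AdjoinRoot.root f ^ (i : ℕ))
    (E : (Fin n → G) → AdjoinRoot f → (Fin n → G))
    (hE : ∀ (gg : Fin n → G) (y : AdjoinRoot f) (i : Fin n),
      E gg y i = ∏ j : Fin n, gg j ^ (B.repr (AdjoinRoot.root f ^ (j : ℕ) * y) i).val)
    (ι : G → (Fin n → G))
    (hι : ∀ (h : G) (i : Fin n), ι h i = if (i : ℕ) = 0 then h else 1) :
    ∀ (h : G) (x : ZMod q),
      E (ι h) (algebraMap (ZMod q) (AdjoinRoot f) x) = ι (h ^ x.val) := by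
  intro h x
  funext i
  rw [hE, hι]
  have key : ∀ j : Fin n,
      (B.repr (AdjoinRoot.root f ^ (j : ℕ) * algebraMap (ZMod q) (AdjoinRoot f) x) i).val
        = if j = i then x.val else 0 := by
    intro j
    have h1 : AdjoinRoot.root f ^ (j : ℕ) * algebraMap (ZMod q) (AdjoinRoot f) x
        = x • B j := by
      rw [hB, Algebra.smul_def, mul_comm]
    rw [h1, map_smul, Finsupp.smul_apply, B.repr_self, Finsupp.single_apply]
    split <;> simp
  calc (∏ j : Fin n, ι h j ^
        (B.repr (AdjoinRoot.root f ^ (j : ℕ) * algebraMap (ZMod q) (AdjoinRoot f) x) i).val)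
      = ∏ j : Fin n, (if j = i then ι h j ^ x.val else 1) := by
        refine Finset.prod_congr rfl fun j _ => ?_
        rw [key j]
        split <;> simp
    _ = ι h i ^ x.val := by rw [Finset.prod_ite_eq' Finset.univ i (fun j => ι h j ^ x.val)]; simp
    _ = if (i : ℕ) = 0 then h ^ x.val else 1 := by
        rw [hι]; split <;> simp
end

section
/- (Basic Fusion Exponential Function, law (1).) For all a b : G and all c d e f : ZMod q, P (P (a, b) (c, d)) (e, f) = P (a, b) (c*e - d*f, c*f + d*e); that is, iterated basic fusion exponentiation corresponds to the Gaussian-integer-style multiplication of exponent pairs. -/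
/-- Basic fusion exponential, law (1): iterated basic fusion exponentiation
corresponds to Gaussian-integer-style multiplication of exponent pairs. -/
theorem basicFusionExp_mul
    {q : ℕ} (hq : Nat.Prime q)
    {G : Type*} [CommGroup G] [Fintype G] (hcard : Fintype.card G = q)
    (P : G × G → ZMod q × ZMod q → G × G)
    (hP : ∀ (a b : G) (e f : ZMod q),
      P (a, b) (e, f) = (a ^ e.val * (b ^ f.val)⁻¹, a ^ f.val * b ^ e.val)) :
    ∀ (a b : G) (c d e f : ZMod q),
      P (P (a, b) (c, d)) (e, f) = P (a, b) (c * e - d * f, c * f + d * e) := by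
  haveI : NeZero q := ⟨hq.ne_zero⟩
  have hq1 : ∀ g : G, g ^ (q : ℤ) = 1 := by
    intro g; rw [zpow_natCast, ← hcard, pow_card_eq_one]
  have key : ∀ (g : G) (m : ℤ) (x : ZMod q), (m : ZMod q) = x → g ^ m = g ^ x.val := by
    intro g m x h
    have h0 : (((m - (x.val : ℤ) : ℤ)) : ZMod q) = 0 := by
      push_cast
      rw [h, ZMod.natCast_val, ZMod.cast_id, sub_self]
    obtain ⟨k, hk⟩ := (ZMod.intCast_zmod_eq_zero_iff_dvd (m - (x.val : ℤ)) q).mp h0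
    have hm : m = (x.val : ℤ) + q * k := by linarith
    rw [hm, zpow_add, zpow_mul, hq1, one_zpow, mul_one, zpow_natCast]
  intro a b c d e f
  rw [hP, hP, hP]
  have h1 : a ^ (c * e - d * f).val =
      a ^ ((c.val : ℤ) * e.val - (d.val : ℤ) * f.val) := by
    rw [key a _ (c * e - d * f)]
    push_cast [ZMod.natCast_val, ZMod.cast_id]
    ring
  have h2 : b ^ (c * f + d * e).val =
      b ^ ((c.val : ℤ) * f.val + (d.val : ℤ) * e.val) := by
    rw [key b _ (c * f + d * e)]
    push_cast [ZMod.natCast_val, ZMod.cast_id]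
    ring
  have h3 : a ^ (c * f + d * e).val =
      a ^ ((c.val : ℤ) * f.val + (d.val : ℤ) * e.val) := by
    rw [key a _ (c * f + d * e)]
    push_cast [ZMod.natCast_val, ZMod.cast_id]
    ring
  have h4 : b ^ (c * e - d * f).val =
      b ^ ((c.val : ℤ) * e.val - (d.val : ℤ) * f.val) := by
    rw [key b _ (c * e - d * f)]
    push_cast [ZMod.natCast_val, ZMod.cast_id]
    ring
  refine Prod.ext ?_ ?_ <;> simp only [h1, h2, h3, h4, ← zpow_natCast] <;>
    simp only [mul_inv, ← zpow_neg, mul_zpow, ← zpow_mul] <;>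
    rw [mul_mul_mul_comm, ← zpow_add, ← zpow_add] <;> congr 1 <;> ring_nf
end

section
/- (Bijectivity of the basic fusion exponential, the n = 2 case of Theorem 1.) Assume additionally q % 4 = 3. Then for every pair (a, b) : G × G with (a, b) ≠ (1, 1), the map (ZMod q × ZMod q) → (G × G) given by (e, f) ↦ P (a, b) (e, f) is bijective. -/
/-- Bijectivity of the basic fusion exponential (the `n = 2` case of Theorem 1):
for `q ≡ 3 (mod 4)` and any base `(a, b) ≠ (1, 1)`, the map
`(e, f) ↦ P (a, b) (e, f)` is a bijection `(ZMod q)² → G²`. -/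
theorem basicFusionExp_bijective
    {q : ℕ} (hq : Nat.Prime q) (h3 : q % 4 = 3)
    {G : Type*} [CommGroup G] [Fintype G] (hcard : Fintype.card G = q)
    (P : G × G → ZMod q × ZMod q → G × G)
    (hP : ∀ (a b : G) (e f : ZMod q),
      P (a, b) (e, f) = (a ^ e.val * (b ^ f.val)⁻¹, a ^ f.val * b ^ e.val)) :
    ∀ (a b : G), (a, b) ≠ ((1 : G), (1 : G)) →
      Function.Bijective (fun ef : ZMod q × ZMod q => P (a, b) ef) := by
  intro a b hab
  haveI : Fact (Nat.Prime q) := ⟨hq⟩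
  haveI : IsCyclic G := isCyclic_of_prime_card (Nat.card_eq_fintype_card.trans hcard)
  obtain ⟨g, hg⟩ := IsCyclic.exists_generator (α := G)
  have horder : orderOf g = q := by
    rw [← hcard, ← Nat.card_eq_fintype_card]; exact orderOf_eq_card_of_forall_mem_zpowers hg
  set ψ : ZMod q → G := fun c => g ^ c.val with hψdef
  have hψ_nat : ∀ m : ℕ, ψ (m : ZMod q) = g ^ m := by
    intro m
    simp only [hψdef, ZMod.val_natCast]
    rw [← horder, pow_mod_orderOf]
  have hψ_inj : Function.Injective ψ := by
    intro c d h
    have h2 := pow_eq_pow_iff_modEq.mp h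
    rw [horder] at h2
    have := (ZMod.natCast_eq_natCast_iff _ _ _).mpr h2
    simpa [ZMod.natCast_val, ZMod.cast_id] using this
  have hsurj : ∀ x : G, ∃ c : ZMod q, ψ c = x := by
    intro x
    obtain ⟨n, hn⟩ := mem_powers_iff_mem_zpowers.mpr (hg x)
    exact ⟨(n : ZMod q), by rw [hψ_nat]; exact hn⟩
  obtain ⟨α, hα⟩ := hsurj a
  obtain ⟨β, hβ⟩ := hsurj b
  -- additive/multiplicative properties
  have hψ_mul : ∀ c d : ZMod q, ψ (c * d) = (ψ c) ^ d.val := by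
    intro c d
    have : c * d = ((c.val * d.val : ℕ) : ZMod q) := by
      push_cast [ZMod.natCast_val, ZMod.cast_id]
      ring
    rw [this, hψ_nat, pow_mul]
  have hψ_add : ∀ c d : ZMod q, ψ (c + d) = ψ c * ψ d := by
    intro c d
    have : c + d = ((c.val + d.val : ℕ) : ZMod q) := by
      push_cast [ZMod.natCast_val, ZMod.cast_id]
      ring
    rw [this, hψ_nat, pow_add]
  have hψ_zero : ψ 0 = 1 := by simpa using hψ_nat 0
  have hψ_neg : ∀ c : ZMod q, ψ (-c) = (ψ c)⁻¹ := by
    intro c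
    have := hψ_add (-c) c
    simp only [neg_add_cancel, hψ_zero] at this
    exact eq_inv_of_mul_eq_one_left this.symm
  -- compute P
  have hPcalc : ∀ e f : ZMod q,
      P (a, b) (e, f) = (ψ (α * e - β * f), ψ (α * f + β * e)) := by
    intro e f
    rw [hP, ← hα, ← hβ, ← hψ_mul, ← hψ_mul, ← hψ_mul, ← hψ_mul,
      ← hψ_neg, ← hψ_add, ← hψ_add, sub_eq_add_neg]
  -- (α, β) ≠ (0, 0)
  have hαβ : α ≠ 0 ∨ β ≠ 0 := by
    by_contra h
    push_neg at h
    apply hab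
    rw [← hα, ← hβ, h.1, h.2, hψ_zero]
  -- determinant nonzero
  have hdet : α ^ 2 + β ^ 2 ≠ 0 := by
    intro h
    rcases eq_or_ne β 0 with hb0 | hb0
    · rw [hb0] at h
      simp only [ne_eq, zero_pow, add_zero, pow_eq_zero_iff, OfNat.ofNat_ne_zero,
        not_false_eq_true] at h
      rcases hαβ with h' | h'
      · exact h' h
      · exact h' hb0
    · have : (α * β⁻¹) ^ 2 = -1 := by
        field_simp
        linear_combination h
      have hsq : IsSquare (-1 : ZMod q) := ⟨α * β⁻¹, by rw [← this]; ring⟩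
      rw [ZMod.exists_sq_eq_neg_one_iff] at hsq
      exact hsq h3
  -- injectivity
  have hinj : Function.Injective (fun ef : ZMod q × ZMod q => P (a, b) ef) := by
    rintro ⟨e, f⟩ ⟨e', f'⟩ h
    simp only [hPcalc, Prod.mk.injEq] at h
    have h1 := hψ_inj h.1
    have h2 := hψ_inj h.2
    have hu : (α ^ 2 + β ^ 2) * (e - e') = 0 := by linear_combination α * h1 + β * h2
    have he : e = e' := by
      rcases mul_eq_zero.mp hu with h' | h'
      · exact absurd h' hdet
      · exact sub_eq_zero.mp h'
    subst he
    have hv : (α ^ 2 + β ^ 2) * (f - f') = 0 := by linear_combination -β * h1 + α * h2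
    have hf : f = f' := by
      rcases mul_eq_zero.mp hv with h' | h'
      · exact absurd h' hdet
      · exact sub_eq_zero.mp h'
    rw [hf]
  rw [Fintype.bijective_iff_injective_and_card]
  refine ⟨hinj, ?_⟩
  simp [hcard, ZMod.card]
end
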